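/- Let D be a self-orthogonal t-(v,k,λ) design with k ≡ 0 (mod 4), and let w with 0 < w < v. If the Mendelsohn system of equations ∑_i C(i,j) n_i = λ_j C(w,j) for j = 0,...,t has no solution in nonnegative integers (n_0, n_2, n_4, ...) with n_i = 0 for odd i, then the dual code C(D)^⊥ contains no vector of weight w. -/

import Mathlib

open Finset

def IsDesign (v t k lam : ℕ) (B : Finset (Finset (Fin v))) : Prop :=
  (∀ b ∈ B, b.card = k) ∧
  ∀ T : Finset (Fin v), T.card = t → (B.filter (fun b => T ⊆ b)).card = lam

def IsSelfOrthogonalDesign (v t k lam : ℕ) (B : Finset (Finset (Fin v))) : Prop :=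
  IsDesign v t k lam B ∧ ∀ b₁ ∈ B, ∀ b₂ ∈ B, b₁ ≠ b₂ → (b₁ ∩ b₂).card % 2 = k % 2

def blockVec {v : ℕ} (b : Finset (Fin v)) : Fin v → ZMod 2 := fun i => if i ∈ b then 1 else 0

def designCode (v : ℕ) (B : Finset (Finset (Fin v))) : Submodule (ZMod 2) (Fin v → ZMod 2) :=
  Submodule.span (ZMod 2) (blockVec '' ↑B)

def dualSet {v : ℕ} (C : Set (Fin v → ZMod 2)) : Set (Fin v → ZMod 2) :=
  {y | ∀ x ∈ C, ∑ i, x i * y i = 0}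

def codeWt {v : ℕ} (x : Fin v → ZMod 2) : ℕ := (univ.filter fun i => x i ≠ 0).card

noncomputable def numWt {v : ℕ} (C : Submodule (ZMod 2) (Fin v → ZMod 2)) (w : ℕ) : ℕ :=
  Nat.card {x : Fin v → ZMod 2 // x ∈ C ∧ codeWt x = w}

/-- Number of `m`-subsets of `s` containing a fixed `J ⊆ s`. -/
lemma count_supersets {α : Type*} [DecidableEq α] (s J : Finset α) (hJ : J ⊆ s) (m : ℕ)
    (hm : J.card ≤ m) :
    ((s.powersetCard m).filter (fun T => J ⊆ T)).card
      = Nat.choose (s.card - J.card) (m - J.card) := by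
  rw [← card_sdiff_of_subset hJ, ← card_powersetCard (m - J.card) (s \ J)]
  apply card_bij (fun T _ => T \ J)
  · intro T hT
    simp only [mem_filter, mem_powersetCard] at hT
    simp only [mem_powersetCard]
    exact ⟨sdiff_subset_sdiff hT.1.1 le_rfl |>.trans le_rfl,
      by rw [card_sdiff_of_subset hT.2, hT.1.2]⟩
  · intro a ha b hb hab
    simp only [mem_filter, mem_powersetCard] at ha hb
    have := congrArg (fun x => x ∪ J) hab
    simpa [sdiff_union_of_subset ha.2, sdiff_union_of_subset hb.2] using this
  · intro T hT
    simp only [mem_powersetCard] at hT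
    refine ⟨T ∪ J, ?_, ?_⟩
    · simp only [mem_filter, mem_powersetCard]
      have hTs : T ⊆ s := hT.1.trans (sdiff_subset)
      have hdisj : Disjoint T J := disjoint_of_subset_left hT.1 sdiff_disjoint
      refine ⟨⟨union_subset hTs hJ, ?_⟩, subset_union_right⟩
      rw [card_union_of_disjoint hdisj, hT.2]
      omega
    · have hdisj : Disjoint T J := disjoint_of_subset_left hT.1 sdiff_disjoint
      rw [union_sdiff_right, sdiff_eq_self_of_disjoint hdisj]

lemma design_lambda_j (v t k lam : ℕ) (B : Finset (Finset (Fin v)))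
    (hD : IsDesign v t k lam B) (J : Finset (Fin v)) (hj : J.card ≤ t) :
    (B.filter (fun b => J ⊆ b)).card * Nat.choose (k - J.card) (t - J.card)
      = lam * Nat.choose (v - J.card) (t - J.card) := by
  classical
  obtain ⟨hcard, hlam⟩ := hD
  have step1 : ∀ b ∈ B, ((b.powersetCard t).filter (fun T => J ⊆ T)).card
      = if J ⊆ b then Nat.choose (k - J.card) (t - J.card) else 0 := by
    intro b hb
    by_cases h : J ⊆ b
    · rw [if_pos h, ← hcard b hb]
      exact count_supersets b J h t hj
    · rw [if_neg h, card_eq_zero, filter_eq_empty_iff]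
      intro T hT hJT
      exact h (hJT.trans (mem_powersetCard.mp hT).1)
  have e1 : ∀ b : Finset (Fin v), (b.powersetCard t).filter (fun T => J ⊆ T)
      = ((univ : Finset (Fin v)).powersetCard t).filter (fun T => J ⊆ T ∧ T ⊆ b) := by
    intro b; ext T
    simp only [mem_filter, mem_powersetCard, subset_univ, true_and]
    tauto
  have swap : ∑ b ∈ B, ((b.powersetCard t).filter (fun T => J ⊆ T)).card
      = Nat.choose (v - J.card) (t - J.card) * lam := by
    calc ∑ b ∈ B, ((b.powersetCard t).filter (fun T => J ⊆ T)).card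
        = ∑ b ∈ B, ∑ T ∈ (univ : Finset (Fin v)).powersetCard t,
            (if J ⊆ T ∧ T ⊆ b then 1 else 0) := by
          simp only [e1, card_filter]
      _ = ∑ T ∈ (univ : Finset (Fin v)).powersetCard t, ∑ b ∈ B,
            (if J ⊆ T ∧ T ⊆ b then 1 else 0) := Finset.sum_comm
      _ = ∑ T ∈ (univ : Finset (Fin v)).powersetCard t,
            (if J ⊆ T then (B.filter (fun b => T ⊆ b)).card else 0) := by
          refine Finset.sum_congr rfl fun T _ => ?_
          by_cases h : J ⊆ T
          · simp only [h, true_and, if_true, card_filter]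
          · simp only [h, false_and, if_false, Finset.sum_const_zero]
      _ = ∑ T ∈ ((univ : Finset (Fin v)).powersetCard t).filter (fun T => J ⊆ T),
            (B.filter (fun b => T ⊆ b)).card := (Finset.sum_filter _ _).symm
      _ = ∑ _T ∈ ((univ : Finset (Fin v)).powersetCard t).filter (fun T => J ⊆ T), lam := by
          refine Finset.sum_congr rfl fun T hT => ?_
          exact hlam T (mem_powersetCard.mp (mem_filter.mp hT).1).2
      _ = Nat.choose (v - J.card) (t - J.card) * lam := by
          rw [Finset.sum_const, smul_eq_mul,
            count_supersets _ _ (subset_univ J) t hj, card_univ, Fintype.card_fin]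
  calc (B.filter (fun b => J ⊆ b)).card * Nat.choose (k - J.card) (t - J.card)
      = ∑ _b ∈ B.filter (fun b => J ⊆ b), Nat.choose (k - J.card) (t - J.card) := by
        rw [Finset.sum_const, smul_eq_mul]
    _ = ∑ b ∈ B, (if J ⊆ b then Nat.choose (k - J.card) (t - J.card) else 0) :=
        Finset.sum_filter _ _
    _ = ∑ b ∈ B, ((b.powersetCard t).filter (fun T => J ⊆ T)).card :=
        (Finset.sum_congr rfl step1).symm
    _ = lam * Nat.choose (v - J.card) (t - J.card) := by rw [swap, mul_comm]

lemma block_count_eq (v t k lam : ℕ) (B : Finset (Finset (Fin v)))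
    (hD : IsDesign v t k lam B) (S : Finset (Fin v)) (j : ℕ) (hj : j ≤ t) :
    (∑ i ∈ Finset.range (S.card + 1),
        Nat.choose i j * (B.filter (fun b => (b ∩ S).card = i)).card)
      * Nat.choose (k - j) (t - j)
    = lam * Nat.choose (v - j) (t - j) * Nat.choose S.card j := by
  classical
  have sumJ : ∑ J ∈ S.powersetCard j, (B.filter (fun b => J ⊆ b)).card
      * Nat.choose (k - j) (t - j)
      = lam * Nat.choose (v - j) (t - j) * Nat.choose S.card j := by
    rw [Finset.sum_congr rfl (fun J hJ => ?_), Finset.sum_const, smul_eq_mul,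
      card_powersetCard, mul_comm]
    have hJc : J.card = j := (mem_powersetCard.mp hJ).2
    have := design_lambda_j v t k lam B hD J (by rw [hJc]; exact hj)
    rw [hJc] at this
    exact this
  have main : ∑ J ∈ S.powersetCard j, (B.filter (fun b => J ⊆ b)).card
      = ∑ i ∈ Finset.range (S.card + 1),
        Nat.choose i j * (B.filter (fun b => (b ∩ S).card = i)).card := by
    calc ∑ J ∈ S.powersetCard j, (B.filter (fun b => J ⊆ b)).card
        = ∑ J ∈ S.powersetCard j, ∑ b ∈ B, (if J ⊆ b then 1 else 0) := by
          simp only [card_filter]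
      _ = ∑ b ∈ B, ∑ J ∈ S.powersetCard j, (if J ⊆ b then 1 else 0) := Finset.sum_comm
      _ = ∑ b ∈ B, ((S.powersetCard j).filter (fun J => J ⊆ b)).card := by
          simp only [card_filter]
      _ = ∑ b ∈ B, Nat.choose (b ∩ S).card j := by
          refine Finset.sum_congr rfl fun b _ => ?_
          have : (S.powersetCard j).filter (fun J => J ⊆ b) = (b ∩ S).powersetCard j := by
            ext J
            simp only [mem_filter, mem_powersetCard, subset_inter_iff]
            tauto
          rw [this, card_powersetCard]
      _ = ∑ i ∈ Finset.range (S.card + 1),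
            ∑ b ∈ B.filter (fun b => (b ∩ S).card = i), Nat.choose (b ∩ S).card j := by
          refine (Finset.sum_fiberwise_of_maps_to (fun b _ => ?_) _).symm
          rw [Finset.mem_range, Nat.lt_succ_iff]
          exact card_le_card inter_subset_right
      _ = ∑ i ∈ Finset.range (S.card + 1),
            Nat.choose i j * (B.filter (fun b => (b ∩ S).card = i)).card := by
          refine Finset.sum_congr rfl fun i _ => ?_
          rw [Finset.sum_congr rfl (fun b hb => by
            rw [(Finset.mem_filter.mp hb).2]), Finset.sum_const, smul_eq_mul, mul_comm]
  rw [← sumJ, ← Finset.sum_mul, main]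

theorem mendelsohn_no_solution (v t k lam : ℕ) (B : Finset (Finset (Fin v)))
    (hD : IsSelfOrthogonalDesign v t k lam B) (hk : k % 4 = 0)
    (w : ℕ) (hw0 : 0 < w) (hwv : w < v)
    (hno : ¬ ∃ n : ℕ → ℕ, (∀ i, Odd i → n i = 0) ∧
        ∀ j ≤ t, (∑ i ∈ Finset.range (w + 1), Nat.choose i j * n i)
            * Nat.choose (k - j) (t - j)
          = lam * Nat.choose (v - j) (t - j) * Nat.choose w j) :
    ∀ y ∈ dualSet (designCode v B : Set (Fin v → ZMod 2)), codeWt y ≠ w := by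
  intro y hy hcw
  classical
  set S : Finset (Fin v) := univ.filter (fun i => y i ≠ 0) with hS
  have hScard : S.card = w := hcw
  apply hno
  refine ⟨fun i => (B.filter (fun b => (b ∩ S).card = i)).card, ?_, ?_⟩
  · intro i hi
    rw [card_eq_zero, filter_eq_empty_iff]
    intro b hb hcontra
    have hmem : blockVec b ∈ designCode v B :=
      Submodule.subset_span ⟨b, hb, rfl⟩
    have h0 := hy (blockVec b) hmem
    have hone : ∀ a : ZMod 2, a ≠ 0 → a = 1 := by decide
    have hterm : ∀ p : Fin v, blockVec b p * y p = if p ∈ b ∩ S then 1 else 0 := by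
      intro p
      have hmemS : p ∈ S ↔ y p ≠ 0 := by simp [hS]
      by_cases hpb : p ∈ b
      · by_cases hpS : y p = 0
        · simp [blockVec, hpb, hpS, mem_inter, hmemS]
        · rw [show blockVec b p * y p = y p by simp [blockVec, hpb], hone (y p) hpS]
          simp [mem_inter, hpb, hmemS, hpS]
      · simp [blockVec, hpb, mem_inter]
    rw [Finset.sum_congr rfl (fun p _ => hterm p), Finset.sum_boole,
      Finset.filter_univ_mem] at h0
    have : (2 : ℕ) ∣ (b ∩ S).card := (ZMod.natCast_eq_zero_iff _ 2).mp h0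
    rw [hcontra] at this
    exact (Nat.not_even_iff_odd.mpr hi) (even_iff_two_dvd.mpr this)
  · intro j hjt
    have := block_count_eq v t k lam B hD.1 S j hjt
    rw [hScard] at this
    exact this
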